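/- arXiv:2101.01798 — 2 statements merged into one kernel-verified Lean document; each statement's English description precedes it below -/
import Mathlib

section
/- For λ = 2/5 and μ = 9/10, with X = [x₀, 1] × [y₀, 1] where (x₀, y₀) is the fixed point of T₀∘T₁, the sets (T₀∘T₁)(X) and T₁(X) are disjoint. -/
theorem stmt5 (T0 T1 : ℝ × ℝ → ℝ × ℝ)
    (hT0 : ∀ p : ℝ × ℝ, T0 p = ((2 / 5 : ℝ) * p.1, (9 / 10 : ℝ) * p.2))
    (hT1 : ∀ p : ℝ × ℝ, T1 p = ((9 / 10 : ℝ) * p.1 + 1 - 9 / 10,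
      (2 / 5 : ℝ) * p.2 + 1 - 2 / 5)) :
    let l : ℝ := 2 / 5
    let m : ℝ := 9 / 10
    let x0 : ℝ := l * (m - 1) / (l * m - 1)
    let y0 : ℝ := m * (l - 1) / (l * m - 1)
    let X : Set (ℝ × ℝ) := Set.Icc x0 1 ×ˢ Set.Icc y0 1
    Disjoint ((T0 ∘ T1) '' X) (T1 '' X) := by
  intro l m x0 y0 X
  rw [Set.disjoint_left]
  rintro ⟨a, b⟩ ⟨⟨x, y⟩, ⟨hx, hy⟩, heq⟩ ⟨⟨x', y'⟩, ⟨hx', hy'⟩, heq'⟩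
  simp only [Function.comp, hT0, hT1, Prod.mk.injEq] at heq heq'
  have hy1 : y ≤ 1 := hy.2
  have hy0' : (27 / 32 : ℝ) ≤ y' := by
    have := hy'.1
    norm_num [y0, m, l] at this
    linarith
  have hb1 : b = 9 / 10 * (2 / 5 * y + 1 - 2 / 5) := heq.2.symm
  have hb2 : b = 2 / 5 * y' + 1 - 2 / 5 := heq'.2.symm
  nlinarith
end

section
/- For (λ, μ) ∈ [3/8, 7/16] × [7/8, 15/16], the fixed point (x₁, y₁) = (λ(μ−1)/(λμ−1), μ(λ−1)/(λμ−1)) of T₀∘T₁ satisfies x₁ + y₁ < 1, and its image under T₁ has coordinate-sum (λ+μ−2)/(λμ−1) > 1, and moreover x₁ < 1−μ and y₁ > 1−λ. -/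
theorem stmt16 (l m : ℝ)
    (hl : l ∈ Set.Icc (3 / 8 : ℝ) (7 / 16)) (hm : m ∈ Set.Icc (7 / 8 : ℝ) (15 / 16)) :
    l * (m - 1) / (l * m - 1) + m * (l - 1) / (l * m - 1) < 1 ∧
    1 < (l + m - 2) / (l * m - 1) ∧
    l * (m - 1) / (l * m - 1) < 1 - m ∧
    m * (l - 1) / (l * m - 1) > 1 - l := by
  obtain ⟨hl1, hl2⟩ := hl
  obtain ⟨hm1, hm2⟩ := hm
  have hd : l * m - 1 < 0 := by nlinarith
  have hd' : l * m - 1 ≠ 0 := ne_of_lt hd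
  refine ⟨?_, ?_, ?_, ?_⟩
  · rw [← add_div, div_lt_one_of_neg hd]
    nlinarith
  · rw [lt_div_iff_of_neg hd]
    nlinarith
  · rw [div_lt_iff_of_neg hd]
    nlinarith [mul_pos (by linarith : (0:ℝ) < 1 - m) (by nlinarith : (0:ℝ) < 1 - l*(m+1))]
  · rw [gt_iff_lt, lt_div_iff_of_neg hd]
    nlinarith
end
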